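/- Let ℓ ≥ 0 be an integer and a ≥ 0 a real number. Define the polynomial P_ℓ(s,a) in s by P_ℓ(s,0) := (2^{ℓ+1}/(2ℓ+1)!!) s^{2ℓ+1}, and, for a ≠ 0, P_ℓ(s,a) := (−2/a)^{ℓ+1} Σ_{k=0}^{ℓ} c^{(ℓ)}_k a^{-k} s^{ℓ-k}, where c^{(ℓ)}_0 = 1 and c^{(ℓ)}_k = (1/(2^k k!)) Π_{j=1-k}^{k} (ℓ+j) for 1 ≤ k ≤ ℓ (with c^{(0)}_0 = 1). Let D be the operator taking a function f : ℝ → ℝ to s ↦ f′(s)/(2s). Then for all real s > 0, d/ds [ D^ℓ ( s ↦ e^{-as} P_ℓ(s,a) ) ](s) = 2 e^{-as}. -/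

import Mathlib

open scoped BigOperators

/-- The coefficients `c^{(ℓ)}_k` (as real numbers). -/
noncomputable def cCoeff (ℓ k : ℕ) : ℝ :=
  if k = 0 then 1
  else (1 / (2 ^ k * (k.factorial : ℝ))) *
    ∏ j ∈ Finset.Icc (1 - (k : ℤ)) (k : ℤ), ((ℓ : ℝ) + (j : ℝ))

/-- The polynomial `P_ℓ(s,a)`. -/
noncomputable def Ppoly (ℓ : ℕ) (a s : ℝ) : ℝ :=
  if a = 0 then (2 ^ (ℓ + 1) / ((2 * ℓ + 1).doubleFactorial : ℝ)) * s ^ (2 * ℓ + 1)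
  else (-2 / a) ^ (ℓ + 1) * ∑ k ∈ Finset.range (ℓ + 1), cCoeff ℓ k * (a ^ k)⁻¹ * s ^ (ℓ - k)

/-- The operator `D : f ↦ (s ↦ f′(s)/(2s))`. -/
noncomputable def Dop : (ℝ → ℝ) → (ℝ → ℝ) := fun f s => deriv f s / (2 * s)

lemma icc_top (a b : ℤ) (h : a ≤ b + 1) :
    Finset.Icc a (b+1) = insert (b+1) (Finset.Icc a b) := by
  ext x; simp [Finset.mem_Icc]; omega

lemma icc_bot (a b : ℤ) (h : a ≤ b) :
    Finset.Icc a b = insert a (Finset.Icc (a+1) b) := by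
  ext x; simp [Finset.mem_Icc]; omega

lemma prod_eq (ℓ k : ℕ) (hk : k ≤ ℓ) :
    ∏ j ∈ Finset.Icc (1 - (k : ℤ)) (k : ℤ), ((ℓ : ℝ) + (j : ℝ)) =
      (ℓ + k).factorial / ((ℓ - k).factorial : ℝ) := by
  induction k with
  | zero => simp [div_self (Nat.cast_ne_zero.2 (Nat.factorial_ne_zero ℓ) : (ℓ.factorial:ℝ) ≠ 0)]
  | succ k ih =>
    have hk' : k ≤ ℓ := by omega
    have h1 : (1 - ((k:ℤ)+1)) = -k := by ring
    have e1 : ((k:ℕ)+1 : ℤ) = (k:ℤ) + 1 := by push_cast; ring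
    push_cast
    rw [h1, icc_top (-(k:ℤ)) k (by omega), Finset.prod_insert (by simp [Finset.mem_Icc]),
      icc_bot (-(k:ℤ)) k (by omega)]
    rw [Finset.prod_insert (by simp [Finset.mem_Icc])]
    have h2 : (-(k:ℤ) + 1) = 1 - k := by ring
    rw [h2]
    have := ih hk'
    push_cast at this
    rw [this]
    obtain ⟨m, rfl⟩ : ∃ m, ℓ = k + 1 + m := ⟨ℓ - (k+1), by omega⟩
    have h3 : (k+1+m) - k = m + 1 := by omega
    have h4 : (k+1+m) - (k+1) = m := by omega
    have h5 : (k+1+m) + (k+1) = ((k+1+m)+k) + 1 := by omega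
    rw [h3, h4, h5, Nat.factorial_succ]
    have hf1 : ((m+1).factorial : ℝ) ≠ 0 := Nat.cast_ne_zero.2 (Nat.factorial_ne_zero _)
    have hf2 : (m.factorial : ℝ) ≠ 0 := Nat.cast_ne_zero.2 (Nat.factorial_ne_zero _)
    rw [Nat.factorial_succ]
    push_cast
    field_simp
    ring

lemma cCoeff_zero (ℓ : ℕ) : cCoeff ℓ 0 = 1 := by simp [cCoeff]

lemma cCoeff_eq (ℓ k : ℕ) (hk : k ≤ ℓ) :
    cCoeff ℓ k = (ℓ + k).factorial / (2 ^ k * (k.factorial : ℝ) * ((ℓ - k).factorial : ℝ)) := by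
  rcases Nat.eq_zero_or_pos k with rfl | hpos
  · simp [cCoeff, div_self (Nat.cast_ne_zero.2 (Nat.factorial_ne_zero ℓ) : (ℓ.factorial:ℝ) ≠ 0)]
  · rw [cCoeff, if_neg (by omega), prod_eq ℓ k hk]
    have h1 : ((2:ℝ) ^ k * (k.factorial : ℝ)) ≠ 0 :=
      mul_ne_zero (by positivity) (Nat.cast_ne_zero.2 (Nat.factorial_ne_zero _))
    have h2 : ((ℓ - k).factorial : ℝ) ≠ 0 := Nat.cast_ne_zero.2 (Nat.factorial_ne_zero _)
    field_simp

lemma rec1 (ℓ k : ℕ) (hk : k + 1 ≤ ℓ) :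
    cCoeff (ℓ+1) (k+1) = cCoeff ℓ (k+1) + ((ℓ:ℝ) + 1 - k) * cCoeff (ℓ+1) k := by
  obtain ⟨m, rfl⟩ : ∃ m, ℓ = k + 1 + m := ⟨ℓ - (k+1), by omega⟩
  rw [cCoeff_eq _ _ (by omega), cCoeff_eq _ _ (by omega), cCoeff_eq _ _ (by omega)]
  have e1 : (k+1+m+1) + (k+1) = 2*k + m + 3 := by omega
  have e2 : (k+1+m+1) - (k+1) = m + 1 := by omega
  have e3 : (k+1+m) + (k+1) = 2*k + m + 2 := by omega
  have e4 : (k+1+m) - (k+1) = m := by omega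
  have e5 : (k+1+m+1) + k = 2*k + m + 2 := by omega
  have e6 : (k+1+m+1) - k = m + 2 := by omega
  rw [e1, e2, e3, e4, e5, e6]
  have f1 : (2*k+m+3).factorial = (2*k+m+2).factorial * (2*k+m+3) := by
    rw [show 2*k+m+3 = (2*k+m+2)+1 by omega, Nat.factorial_succ]; ring
  have f2 : (m+1).factorial = m.factorial * (m+1) := by rw [Nat.factorial_succ]; ring
  have f3 : (m+2).factorial = m.factorial * (m+1) * (m+2) := by
    rw [show m+2 = (m+1)+1 by omega, Nat.factorial_succ, Nat.factorial_succ]; ring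
  have f4 : (k+1).factorial = k.factorial * (k+1) := by rw [Nat.factorial_succ]; ring
  rw [f1, f2, f3, f4]
  have hm : (m.factorial : ℝ) ≠ 0 := Nat.cast_ne_zero.2 (Nat.factorial_ne_zero _)
  have hkf : (k.factorial : ℝ) ≠ 0 := Nat.cast_ne_zero.2 (Nat.factorial_ne_zero _)
  have h2 : (2:ℝ) ^ k ≠ 0 := by positivity
  push_cast
  field_simp
  ring

lemma rec2 (ℓ : ℕ) : cCoeff (ℓ+1) (ℓ+1) = cCoeff (ℓ+1) ℓ := by
  rw [cCoeff_eq _ _ le_rfl, cCoeff_eq _ _ (by omega)]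
  have e1 : (ℓ+1) + (ℓ+1) = 2*ℓ+2 := by omega
  have e2 : (ℓ+1) - (ℓ+1) = 0 := by omega
  have e3 : (ℓ+1) + ℓ = 2*ℓ+1 := by omega
  have e4 : (ℓ+1) - ℓ = 1 := by omega
  rw [e1, e2, e3, e4]
  have f1 : (2*ℓ+2).factorial = (2*ℓ+1).factorial * (2*ℓ+2) := by
    rw [show 2*ℓ+2 = (2*ℓ+1)+1 by omega, Nat.factorial_succ]; ring
  have f4 : (ℓ+1).factorial = ℓ.factorial * (ℓ+1) := by rw [Nat.factorial_succ]; ring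
  rw [f1, f4, Nat.factorial_zero, Nat.factorial_one]
  have hm : ((2*ℓ+1).factorial : ℝ) ≠ 0 := Nat.cast_ne_zero.2 (Nat.factorial_ne_zero _)
  have hkf : (ℓ.factorial : ℝ) ≠ 0 := Nat.cast_ne_zero.2 (Nat.factorial_ne_zero _)
  have h2 : (2:ℝ) ^ ℓ ≠ 0 := by positivity
  push_cast
  rw [div_eq_div_iff (by positivity) (by positivity)]
  ring

lemma sum_identity (ℓ : ℕ) (a s : ℝ) (ha : a ≠ 0) :
    (∑ k ∈ Finset.range (ℓ+2), cCoeff (ℓ+1) k * (a^k)⁻¹ *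
        ((((ℓ+1) - k : ℕ) : ℝ) * s ^ ((ℓ+1) - k - 1)))
      = a * (∑ k ∈ Finset.range (ℓ+2), cCoeff (ℓ+1) k * (a^k)⁻¹ * s ^ ((ℓ+1) - k))
        - a * (∑ k ∈ Finset.range (ℓ+1), cCoeff ℓ k * (a^k)⁻¹ * s ^ ((ℓ+1) - k)) := by
  rw [Finset.sum_range_succ (n := ℓ+1)]
  simp only [Nat.sub_self, Nat.cast_zero, zero_mul, mul_zero, add_zero]
  rw [Finset.sum_range_succ (n := ℓ)]
  rw [Finset.sum_range_succ (f := fun k => cCoeff (ℓ+1) k * (a^k)⁻¹ * s ^ ((ℓ+1) - k)) (n := ℓ+1)]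
  have h1 : a * (∑ k ∈ Finset.range (ℓ+1), cCoeff (ℓ+1) k * (a^k)⁻¹ * s ^ ((ℓ+1) - k))
      - a * (∑ k ∈ Finset.range (ℓ+1), cCoeff ℓ k * (a^k)⁻¹ * s ^ ((ℓ+1) - k))
      = ∑ x ∈ Finset.range ℓ, cCoeff (ℓ+1) x * (a^x)⁻¹ *
          ((((ℓ+1) - x : ℕ) : ℝ) * s ^ ((ℓ+1) - x - 1)) := by
    rw [← mul_sub, ← Finset.sum_sub_distrib, Finset.mul_sum]
    rw [Finset.sum_range_succ' (f := fun k =>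
        a * (cCoeff (ℓ+1) k * (a^k)⁻¹ * s ^ ((ℓ+1) - k) - cCoeff ℓ k * (a^k)⁻¹ * s ^ ((ℓ+1) - k))) (n := ℓ)]
    rw [cCoeff_zero, cCoeff_zero, sub_self, mul_zero, add_zero]
    refine Finset.sum_congr rfl ?_
    intro x hx
    simp only [Finset.mem_range] at hx
    rw [rec1 ℓ x (by omega)]
    have e1 : (ℓ+1) - (x+1) = ℓ - x := by omega
    have e2 : (ℓ+1) - x - 1 = ℓ - x := by omega
    have e3 : (((ℓ+1) - x : ℕ) : ℝ) = (ℓ:ℝ) + 1 - x := by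
      rw [Nat.cast_sub (by omega)]; push_cast; ring
    rw [e1, e2, e3]
    have hax : (a:ℝ) ^ (x+1) ≠ 0 := pow_ne_zero _ ha
    field_simp
    ring
  have h2 : cCoeff (ℓ+1) ℓ * (a^ℓ)⁻¹ * ((((ℓ+1) - ℓ : ℕ) : ℝ) * s ^ ((ℓ+1) - ℓ - 1))
      = a * (cCoeff (ℓ+1) (ℓ+1) * (a^(ℓ+1))⁻¹ * s ^ ((ℓ+1) - (ℓ+1))) := by
    rw [rec2]
    have e1 : (ℓ+1) - ℓ = 1 := by omega
    have e2 : (ℓ+1) - ℓ - 1 = 0 := by omega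
    have e3 : (ℓ+1) - (ℓ+1) = 0 := by omega
    rw [e2, e1, e3]
    have hax : (a:ℝ) ^ (ℓ+1) ≠ 0 := pow_ne_zero _ ha
    rw [pow_succ]
    field_simp
    ring
  linear_combination h2 - h1

lemma hasDerivAt_step (ℓ : ℕ) (a : ℝ) (s : ℝ) :
    HasDerivAt (fun s : ℝ => Real.exp (-a*s) * Ppoly (ℓ+1) a s)
      (2 * s * (Real.exp (-a*s) * Ppoly ℓ a s)) s := by
  by_cases ha : a = 0
  · subst ha
    simp only [Ppoly, if_pos rfl, neg_zero, zero_mul, Real.exp_zero, one_mul]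
    have h := (hasDerivAt_pow (2*(ℓ+1)+1) s).const_mul
      ((2:ℝ) ^ (ℓ+1+1) / ((2*(ℓ+1)+1).doubleFactorial : ℝ))
    refine h.congr_deriv ?_
    have hd : (2*(ℓ+1)+1).doubleFactorial = (2*ℓ+3) * (2*ℓ+1).doubleFactorial := by
      rw [show 2*(ℓ+1)+1 = (2*ℓ+1)+2 by omega, Nat.doubleFactorial_add_two]
    have hpos : ((2*ℓ+1).doubleFactorial : ℝ) ≠ 0 := by
      exact_mod_cast (Nat.doubleFactorial_pos _).ne'
    rw [hd]
    have e1 : 2*(ℓ+1)+1-1 = 2*ℓ+2 := by omega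
    rw [e1]
    push_cast
    rw [show (2:ℝ)^(ℓ+1+1) = 2^(ℓ+1)*2 by rw [pow_succ],
        show (s:ℝ)^(2*ℓ+2) = s^(2*ℓ+1)*s by rw [← pow_succ]]
    field_simp
    ring
  · simp only [Ppoly, if_neg ha]
    have hS : HasDerivAt (fun s : ℝ => ∑ k ∈ Finset.range (ℓ+1+1),
          cCoeff (ℓ+1) k * (a^k)⁻¹ * s ^ ((ℓ+1) - k))
        (∑ k ∈ Finset.range (ℓ+1+1), cCoeff (ℓ+1) k * (a^k)⁻¹ *
          ((((ℓ+1) - k : ℕ) : ℝ) * s ^ ((ℓ+1) - k - 1))) s := by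
      apply HasDerivAt.fun_sum
      intro k hk
      exact (hasDerivAt_pow ((ℓ+1)-k) s).const_mul (cCoeff (ℓ+1) k * (a^k)⁻¹)
    have hexp : HasDerivAt (fun s : ℝ => Real.exp (-a*s)) (Real.exp (-a*s) * (-a)) s := by
      have := ((hasDerivAt_id s).const_mul (-a)).exp
      simpa using this
    have h := hexp.mul (hS.const_mul ((-2/a) ^ (ℓ+1+1)))
    refine h.congr_deriv ?_
    set S := ∑ k ∈ Finset.range (ℓ+1+1), cCoeff (ℓ+1) k * (a^k)⁻¹ * s ^ ((ℓ+1) - k) with hSdef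
    set S' := ∑ k ∈ Finset.range (ℓ+1+1), cCoeff (ℓ+1) k * (a^k)⁻¹ *
          ((((ℓ+1) - k : ℕ) : ℝ) * s ^ ((ℓ+1) - k - 1)) with hS'def
    set T := ∑ k ∈ Finset.range (ℓ+1), cCoeff ℓ k * (a^k)⁻¹ * s ^ (ℓ - k) with hTdef
    set T1 := ∑ k ∈ Finset.range (ℓ+1), cCoeff ℓ k * (a^k)⁻¹ * s ^ ((ℓ+1) - k) with hT1def
    have hsT : s * T = T1 := by
      rw [hTdef, hT1def, Finset.mul_sum]
      refine Finset.sum_congr rfl ?_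
      intro k hk
      simp only [Finset.mem_range] at hk
      rw [show (ℓ+1) - k = (ℓ-k)+1 by omega, pow_succ]
      ring
    have key : S' = a * S - a * T1 := sum_identity ℓ a s ha
    rw [key, ← hsT]
    have hC : ((-2/a:ℝ)) ^ (ℓ+1+1) = (-2/a) * (-2/a) ^ (ℓ+1) := by
      rw [pow_succ]; ring
    rw [hC]
    field_simp
    ring

lemma hasDerivAt_base (a : ℝ) (s : ℝ) :
    HasDerivAt (fun s : ℝ => Real.exp (-a*s) * Ppoly 0 a s) (2 * Real.exp (-a*s)) s := by
  have hexp : HasDerivAt (fun s : ℝ => Real.exp (-a*s)) (Real.exp (-a*s) * (-a)) s := by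
    have := ((hasDerivAt_id s).const_mul (-a)).exp
    simpa using this
  by_cases ha : a = 0
  · subst ha
    simp only [Ppoly, if_pos rfl, neg_zero, zero_mul, Real.exp_zero, one_mul]
    norm_num [Nat.doubleFactorial]
    simpa using (hasDerivAt_id s).const_mul (2:ℝ)
  · have hP : ∀ x : ℝ, Ppoly 0 a x = -2/a := by
      intro x
      simp [Ppoly, if_neg ha, cCoeff]
    simp only [hP]
    have h := hexp.mul_const (-2/a)
    refine h.congr_deriv ?_
    field_simp

lemma Dop_iter_congr (n : ℕ) : ∀ f g : ℝ → ℝ, (∀ x > 0, f x = g x) →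
    ∀ x > 0, Dop^[n] f x = Dop^[n] g x := by
  induction n with
  | zero => intro f g h x hx; exact h x hx
  | succ n ih =>
    intro f g h x hx
    rw [Function.iterate_succ_apply, Function.iterate_succ_apply]
    refine ih _ _ ?_ x hx
    intro y hy
    show deriv f y / (2*y) = deriv g y / (2*y)
    congr 1
    apply Filter.EventuallyEq.deriv_eq
    filter_upwards [isOpen_Ioi.mem_nhds hy] with z hz
    exact h z hz

/-- `d/ds [ D^ℓ (s ↦ e^{-as} P_ℓ(s,a)) ](s) = 2 e^{-as}` for `s > 0`. -/
theorem stmt_9 (ℓ : ℕ) (a : ℝ) (ha : 0 ≤ a) (s : ℝ) (hs : 0 < s) :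
    deriv (Dop^[ℓ] fun s : ℝ => Real.exp (-a * s) * Ppoly ℓ a s) s =
      2 * Real.exp (-a * s) := by
  induction ℓ generalizing s with
  | zero =>
    simpa using (hasDerivAt_base a s).deriv
  | succ ℓ ih =>
    have hstep : ∀ x > 0, Dop (fun s : ℝ => Real.exp (-a*s) * Ppoly (ℓ+1) a s) x
        = Real.exp (-a*x) * Ppoly ℓ a x := by
      intro x hx
      show deriv _ x / (2*x) = _
      rw [(hasDerivAt_step ℓ a x).deriv]
      have hx' : x ≠ 0 := hx.ne'
      field_simp
    rw [Function.iterate_succ_apply]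
    have hag := Dop_iter_congr ℓ _ (fun s : ℝ => Real.exp (-a*s) * Ppoly ℓ a s) hstep
    have hEq : deriv (Dop^[ℓ] (Dop fun s : ℝ => Real.exp (-a*s) * Ppoly (ℓ+1) a s)) s
        = deriv (Dop^[ℓ] fun s : ℝ => Real.exp (-a*s) * Ppoly ℓ a s) s := by
      apply Filter.EventuallyEq.deriv_eq
      filter_upwards [isOpen_Ioi.mem_nhds hs] with z hz
      exact hag z hz
    rw [hEq]
    exact ih s hs
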